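/- (Convexity of the 5-tuple quadratic image in the example.) Let n ≥ 5, s = (1,...,1) ∈ ℝ^n, γ = √(n/2) − 1/4, and define the symmetric (n+1)×(n+1) matrices H₀ with blocks (I_n, s; sᵀ, 2γ), H₁ with blocks (0_{n×n}, 0; 0ᵀ, −2), H₂ with blocks (4I_n, 2s; 2sᵀ, −2), H₃ with blocks (0_{n×n}, 2s; 2sᵀ, 2), and H₄ with blocks (4I_n, 0; 0ᵀ, 2). Then the set {(yᵀH₀y, yᵀH₁y, yᵀH₂y, yᵀH₃y, yᵀH₄y) : y ∈ ℝ^{n+1}} is a convex subset of ℝ⁵. -/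

import Mathlib

set_option maxHeartbeats 1000000

open Matrix Set

private lemma cone_convex (N : ℝ) (hN : 0 ≤ N) :
    Convex ℝ {p : Fin 3 → ℝ | 0 ≤ p 0 ∧ 0 ≤ p 2 ∧ (p 1)^2 ≤ N * (p 0 * p 2)} := by
  intro p hp q hq α β hα hβ hαβ
  obtain ⟨ha, hv, hb⟩ := hp
  obtain ⟨ha', hv', hb'⟩ := hq
  have key : 2 * (p 1) * (q 1) ≤ N * (p 0 * q 2) + N * (q 0 * p 2) := by
    rcases eq_or_lt_of_le ha with h | h
    · rw [← h] at hb
      have hb0 : p 1 = 0 := by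
        have h2 : (p 1)^2 = 0 := le_antisymm (by simpa using hb) (sq_nonneg _)
        exact pow_eq_zero_iff (by norm_num) |>.mp h2
      rw [hb0]
      nlinarith [mul_nonneg ha hv', mul_nonneg ha' hv, mul_nonneg hN (mul_nonneg ha hv'),
        mul_nonneg hN (mul_nonneg ha' hv)]
    rcases eq_or_lt_of_le ha' with h' | h'
    · rw [← h'] at hb'
      have hb0 : q 1 = 0 := by
        have h2 : (q 1)^2 = 0 := le_antisymm (by simpa using hb') (sq_nonneg _)
        exact pow_eq_zero_iff (by norm_num) |>.mp h2
      rw [hb0]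
      nlinarith [mul_nonneg hN (mul_nonneg ha hv'), mul_nonneg hN (mul_nonneg ha' hv)]
    · have haa' : 0 < p 0 * q 0 := mul_pos h h'
      have h1 : (q 0)^2 * (p 1)^2 ≤ (q 0)^2 * (N * (p 0 * p 2)) :=
        mul_le_mul_of_nonneg_left hb (sq_nonneg _)
      have h2 : (p 0)^2 * (q 1)^2 ≤ (p 0)^2 * (N * (q 0 * q 2)) :=
        mul_le_mul_of_nonneg_left hb' (sq_nonneg _)
      have h3 : 2*(p 0*(q 1))*(q 0*(p 1)) ≤ (p 0)^2*(q 1)^2 + (q 0)^2*(p 1)^2 := by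
        nlinarith [sq_nonneg (p 0 * q 1 - q 0 * p 1)]
      have h4 : (p 0 * q 0) * (2 * (p 1) * (q 1)) ≤
          (p 0 * q 0) * (N * (p 0 * q 2) + N * (q 0 * p 2)) := by nlinarith
      exact (mul_le_mul_iff_right₀ haa').mp h4
  refine ⟨?_, ?_, ?_⟩ <;> simp only [Pi.add_apply, Pi.smul_apply, smul_eq_mul]
  · exact add_nonneg (mul_nonneg hα ha) (mul_nonneg hβ ha')
  · exact add_nonneg (mul_nonneg hα hv) (mul_nonneg hβ hv')
  · nlinarith [key, hb, hb', mul_nonneg hα hβ, sq_nonneg α, sq_nonneg β,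
      mul_le_mul_of_nonneg_left hb (sq_nonneg α), mul_le_mul_of_nonneg_left hb' (sq_nonneg β),
      mul_le_mul_of_nonneg_left key (mul_nonneg hα hβ)]

theorem example_five_tuple_image_convex (n : ℕ) (hn : 5 ≤ n)
    (s : Fin n → ℝ) (hs : ∀ i, s i = 1)
    (γ : ℝ) (hγ : γ = Real.sqrt ((n : ℝ) / 2) - 1 / 4)
    (H₀ H₁ H₂ H₃ H₄ : Matrix (Fin n ⊕ Fin 1) (Fin n ⊕ Fin 1) ℝ)
    (hH₀ : H₀ = Matrix.fromBlocks (1 : Matrix (Fin n) (Fin n) ℝ)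
      (Matrix.of fun i _ => s i) (Matrix.of fun _ j => s j) !![2 * γ])
    (hH₁ : H₁ = Matrix.fromBlocks (0 : Matrix (Fin n) (Fin n) ℝ) 0 0 !![-2])
    (hH₂ : H₂ = Matrix.fromBlocks ((4 : ℝ) • (1 : Matrix (Fin n) (Fin n) ℝ))
      (Matrix.of fun i _ => 2 * s i) (Matrix.of fun _ j => 2 * s j) !![-2])
    (hH₃ : H₃ = Matrix.fromBlocks (0 : Matrix (Fin n) (Fin n) ℝ)
      (Matrix.of fun i _ => 2 * s i) (Matrix.of fun _ j => 2 * s j) !![2])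
    (hH₄ : H₄ = Matrix.fromBlocks ((4 : ℝ) • (1 : Matrix (Fin n) (Fin n) ℝ)) 0 0 !![2]) :
    Convex ℝ (Set.range (fun y : Fin n ⊕ Fin 1 → ℝ =>
      (![y ⬝ᵥ (H₀ *ᵥ y), y ⬝ᵥ (H₁ *ᵥ y), y ⬝ᵥ (H₂ *ᵥ y),
         y ⬝ᵥ (H₃ *ᵥ y), y ⬝ᵥ (H₄ *ᵥ y)] : Fin 5 → ℝ))) := by
  have hn0 : (0:ℝ) < n := by
    have : 0 < n := by omega
    exact_mod_cast this
  set M : Matrix (Fin 5) (Fin 3) ℝ :=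
    !![2*γ, 2, 1; -2, 0, 0; -2, 4, 4; 2, 4, 0; 2, 0, 4] with hM
  -- the five quadratic forms in terms of (t², t·S, Q)
  have e0 : ∀ y : Fin n ⊕ Fin 1 → ℝ, y ⬝ᵥ (H₀ *ᵥ y)
      = (∑ i, y (Sum.inl i)^2) + 2 * y (Sum.inr 0) * (∑ i, y (Sum.inl i))
        + 2*γ*(y (Sum.inr 0))^2 := by
    intro y
    rw [hH₀]
    simp [dotProduct, mulVec, Fintype.sum_sum_type, Matrix.fromBlocks, Matrix.one_apply, hs,
      Finset.sum_ite_eq, Finset.sum_ite_eq']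
    ring_nf
    simp [Finset.sum_add_distrib, ← Finset.sum_mul, ← Finset.mul_sum]
    ring
  have e1 : ∀ y : Fin n ⊕ Fin 1 → ℝ, y ⬝ᵥ (H₁ *ᵥ y) = -2*(y (Sum.inr 0))^2 := by
    intro y
    rw [hH₁]
    simp [dotProduct, mulVec, Fintype.sum_sum_type, Matrix.fromBlocks]
    ring
  have e2 : ∀ y : Fin n ⊕ Fin 1 → ℝ, y ⬝ᵥ (H₂ *ᵥ y)
      = 4*(∑ i, y (Sum.inl i)^2) + 4 * y (Sum.inr 0) * (∑ i, y (Sum.inl i))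
        - 2*(y (Sum.inr 0))^2 := by
    intro y
    rw [hH₂]
    simp [dotProduct, mulVec, Fintype.sum_sum_type, Matrix.fromBlocks, Matrix.one_apply, hs,
      Finset.sum_ite_eq, Finset.sum_ite_eq']
    ring_nf
    simp [Finset.sum_add_distrib, ← Finset.sum_mul, ← Finset.mul_sum]
    ring
  have e3 : ∀ y : Fin n ⊕ Fin 1 → ℝ, y ⬝ᵥ (H₃ *ᵥ y)
      = 4 * y (Sum.inr 0) * (∑ i, y (Sum.inl i)) + 2*(y (Sum.inr 0))^2 := by
    intro y
    rw [hH₃]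
    simp [dotProduct, mulVec, Fintype.sum_sum_type, Matrix.fromBlocks, hs]
    ring_nf
    simp [Finset.sum_add_distrib, ← Finset.sum_mul, ← Finset.mul_sum]
    ring
  have e4 : ∀ y : Fin n ⊕ Fin 1 → ℝ, y ⬝ᵥ (H₄ *ᵥ y)
      = 4*(∑ i, y (Sum.inl i)^2) + 2*(y (Sum.inr 0))^2 := by
    intro y
    rw [hH₄]
    simp [dotProduct, mulVec, Fintype.sum_sum_type, Matrix.fromBlocks, Matrix.one_apply,
      Finset.sum_ite_eq, Finset.sum_ite_eq']
    ring_nf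
    simp [Finset.sum_add_distrib, ← Finset.sum_mul, ← Finset.mul_sum]
    ring
  have hval : ∀ y : Fin n ⊕ Fin 1 → ℝ,
      (![y ⬝ᵥ (H₀ *ᵥ y), y ⬝ᵥ (H₁ *ᵥ y), y ⬝ᵥ (H₂ *ᵥ y),
         y ⬝ᵥ (H₃ *ᵥ y), y ⬝ᵥ (H₄ *ᵥ y)] : Fin 5 → ℝ)
      = M.mulVecLin ![(y (Sum.inr 0))^2,
          y (Sum.inr 0) * (∑ i, y (Sum.inl i)), ∑ i, y (Sum.inl i)^2] := by
    intro y
    funext j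
    fin_cases j <;>
      simp only [Matrix.cons_val_zero, Matrix.cons_val_one, Matrix.head_cons,
        Matrix.cons_val_two, Matrix.tail_cons, Matrix.cons_val_three, Matrix.cons_val_four,
        Matrix.head_fin_const, Fin.isValue, e0 y, e1 y, e2 y, e3 y, e4 y,
        Matrix.mulVecLin_apply, hM] <;>
      simp [mulVec, dotProduct, Fin.sum_univ_three] <;> ring
  have hrange : Set.range (fun y : Fin n ⊕ Fin 1 → ℝ =>
      (![y ⬝ᵥ (H₀ *ᵥ y), y ⬝ᵥ (H₁ *ᵥ y), y ⬝ᵥ (H₂ *ᵥ y),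
         y ⬝ᵥ (H₃ *ᵥ y), y ⬝ᵥ (H₄ *ᵥ y)] : Fin 5 → ℝ))
      = ⇑M.mulVecLin ''
        {p : Fin 3 → ℝ | 0 ≤ p 0 ∧ 0 ≤ p 2 ∧ (p 1)^2 ≤ (n:ℝ) * (p 0 * p 2)} := by
    ext z
    constructor
    · rintro ⟨y, rfl⟩
      refine ⟨![(y (Sum.inr 0))^2, y (Sum.inr 0) * (∑ i, y (Sum.inl i)),
        ∑ i, y (Sum.inl i)^2], ⟨?_, ?_, ?_⟩, (hval y).symm⟩
      · simp [sq_nonneg]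
      · simp only [Matrix.cons_val_two, Matrix.tail_cons, Matrix.head_cons]
        exact Finset.sum_nonneg fun i _ => sq_nonneg _
      · have hCS : (∑ i, y (Sum.inl i))^2 ≤ (∑ i, y (Sum.inl i)^2) * n := by
          have := Finset.sum_mul_sq_le_sq_mul_sq Finset.univ
            (fun i => y (Sum.inl i)) (fun _ => (1:ℝ))
          simpa using this
        simp only [Matrix.cons_val_zero, Matrix.cons_val_one, Matrix.head_cons,
          Matrix.cons_val_two, Matrix.tail_cons]
        nlinarith [mul_le_mul_of_nonneg_left hCS (sq_nonneg (y (Sum.inr 0)))]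
    · rintro ⟨p, ⟨ha, hv, hb⟩, rfl⟩
      set t := Real.sqrt (p 0) with htdef
      have ht2 : t^2 = p 0 := Real.sq_sqrt ha
      set u : ℝ := if p 0 = 0 then 0 else p 1 / t with hu
      have htu : t * u = p 1 := by
        by_cases h : p 0 = 0
        · have hb0 : p 1 = 0 := by
            have h2 : (p 1)^2 = 0 := le_antisymm (by rw [h] at hb; simpa using hb) (sq_nonneg _)
            exact pow_eq_zero_iff (by norm_num) |>.mp h2
          simp [hu, h, hb0]
        · have htpos : 0 < t := Real.sqrt_pos.mpr (lt_of_le_of_ne ha (Ne.symm h))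
          rw [hu, if_neg h]
          field_simp
      have hu2 : u^2 ≤ (n:ℝ) * p 2 := by
        by_cases h : p 0 = 0
        · rw [hu, if_pos h]
          simpa using mul_nonneg hn0.le hv
        · have hapos : 0 < p 0 := lt_of_le_of_ne ha (Ne.symm h)
          rw [hu, if_neg h, div_pow, ht2, div_le_iff₀ hapos]
          nlinarith
      have hvu : 0 ≤ (p 2 - u^2/(n:ℝ))/2 := by
        have : u^2/(n:ℝ) ≤ p 2 := by
          rw [div_le_iff₀ hn0]
          nlinarith
        linarith
      set c := Real.sqrt ((p 2 - u^2/(n:ℝ))/2) with hc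
      have hc2 : c^2 = (p 2 - u^2/(n:ℝ))/2 := Real.sq_sqrt hvu
      set i0 : Fin n := ⟨0, by omega⟩ with hi0
      set i1 : Fin n := ⟨1, by omega⟩ with hi1
      have hi01 : i0 ≠ i1 := by simp [hi0, hi1, Fin.ext_iff]
      set d : Fin n → ℝ := fun i => (if i = i0 then 1 else 0) - (if i = i1 then 1 else 0)
        with hd
      set x : Fin n → ℝ := fun i => u/(n:ℝ) + c * d i with hx
      have hsd : ∑ i, d i = 0 := by
        simp [hd, Finset.sum_sub_distrib]
      have hsd2 : ∑ i, (d i)^2 = 2 := by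
        have h1 : ∀ i, (d i)^2 = (if i = i0 then 1 else 0) + (if i = i1 then 1 else 0) := by
          intro i
          by_cases h0 : i = i0
          · have h1 : i ≠ i1 := by rw [h0]; exact hi01
            simp [hd, h0, if_neg h1, hi01]
          · by_cases h1 : i = i1 <;> simp [hd, h0, h1, Ne.symm hi01]
        rw [Finset.sum_congr rfl fun i _ => h1 i]
        simp [Finset.sum_add_distrib]
        norm_num
      have hS : ∑ i, x i = u := by
        simp [hx, Finset.sum_add_distrib, ← Finset.mul_sum, hsd]
        field_simp
      have hQ : ∑ i, (x i)^2 = p 2 := by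
        have h1 : ∀ i, (x i)^2 = (u/(n:ℝ))^2 + (2*(u/(n:ℝ))*c) * d i + c^2 * (d i)^2 := by
          intro i; simp only [hx]; ring
        rw [Finset.sum_congr rfl fun i _ => h1 i]
        simp [Finset.sum_add_distrib, ← Finset.mul_sum, hsd, hsd2, hc2]
        field_simp
        ring
      have hps : (![(Sum.elim x (fun _ : Fin 1 => t) (Sum.inr 0))^2,
          Sum.elim x (fun _ : Fin 1 => t) (Sum.inr 0) * (∑ i, Sum.elim x (fun _ : Fin 1 => t) (Sum.inl i)),
          ∑ i, (Sum.elim x (fun _ : Fin 1 => t) (Sum.inl i))^2] : Fin 3 → ℝ) = p := by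
        funext j
        fin_cases j <;>
          simp [Sum.elim_inl, Sum.elim_inr, hS, hQ, ht2, htu]
      exact ⟨Sum.elim x (fun _ : Fin 1 => t), (hval _).trans (congrArg _ hps)⟩
  rw [hrange]
  exact (cone_convex (n:ℝ) hn0.le).linear_image M.mulVecLin
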